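/- The chromatic number of the collinearity graph G equals 8: G admits a proper coloring with 8 colors but no proper coloring with 7 colors. -/

import Mathlib

/-- The nine blocks: 5-element subsets of `Fin 15`. -/
def blocks : Finset (Finset (Fin 15)) :=
  { {0,1,2,3,4}, {0,5,6,7,8}, {9,10,11,12,13}, {1,5,9,10,14}, {1,2,3,6,11},
    {4,5,7,8,12}, {2,7,9,13,14}, {3,8,10,13,14}, {0,4,6,11,12} }

/-- The collinearity graph: distinct vertices are adjacent iff they lie in a common block. -/
def G : SimpleGraph (Fin 15) where
  Adj v w := v ≠ w ∧ ∃ B ∈ blocks, v ∈ B ∧ w ∈ B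
  symm := by
    constructor
    intro v w h
    obtain ⟨hvw, B, hB, hv, hw⟩ := h
    exact ⟨hvw.symm, B, hB, hw, hv⟩
  loopless := by
    constructor
    intro v h
    exact h.1 rfl

def col : Fin 15 → Fin 8 := ![0,1,2,3,4,2,5,1,6,0,4,6,3,5,7]

instance : DecidableRel G.Adj := fun v w => by
  unfold G; exact instDecidableAnd

lemma col_valid : ∀ v w : Fin 15, G.Adj v w → col v ≠ col w := by decide

lemma no_indep3 : ∀ a b c : Fin 15, a ≠ b → a ≠ c → b ≠ c →
    G.Adj a b ∨ G.Adj a c ∨ G.Adj b c := by decide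

theorem chromatic_number_eq_eight :
    G.chromaticNumber = 8 ∧ G.Colorable 8 ∧ ¬ G.Colorable 7 := by
  have h8 : G.Colorable 8 := ⟨SimpleGraph.Coloring.mk col (fun h => col_valid _ _ h)⟩
  have h7 : ¬ G.Colorable 7 := by
    rintro ⟨C⟩
    have hfib : ∀ i : Fin 7, (Finset.univ.filter (fun v => C v = i)).card ≤ 2 := by
      intro i
      by_contra h
      push_neg at h
      obtain ⟨a, b, c, ha, hb, hc, hab, hac, hbc⟩ := Finset.two_lt_card_iff.mp h
      simp only [Finset.mem_filter] at ha hb hc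
      rcases no_indep3 a b c hab hac hbc with h | h | h
      · exact C.valid h (ha.2.trans hb.2.symm)
      · exact C.valid h (ha.2.trans hc.2.symm)
      · exact C.valid h (hb.2.trans hc.2.symm)
    have := Finset.card_eq_sum_card_fiberwise
      (f := C) (s := (Finset.univ : Finset (Fin 15))) (t := (Finset.univ : Finset (Fin 7)))
      (fun x _ => Finset.mem_univ _)
    simp only [Finset.card_univ, Fintype.card_fin] at this
    have hle : (15 : ℕ) ≤ 14 := by
      calc (15:ℕ) = _ := this
        _ ≤ ∑ _i : Fin 7, 2 := Finset.sum_le_sum (fun i _ => hfib i)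
        _ = 14 := by simp
    omega
  refine ⟨?_, h8, h7⟩
  apply le_antisymm
  · exact h8.chromaticNumber_le
  · by_contra h
    push_neg at h
    have : G.chromaticNumber ≤ 7 := Order.le_of_lt_add_one (by exact_mod_cast h)
    exact h7 (SimpleGraph.chromaticNumber_le_iff_colorable.mp (by exact_mod_cast this))
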